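/- Let K be a field with a valuation v taking values in a linearly ordered commutative group with zero, and let k ⊆ K be a subfield contained in the valuation ring. Let res : K → K be a function with res(K) ⊆ k which is additive, satisfies res(αx) = α·res(x) for all α ∈ k and x ∈ K, satisfies res(x) = 0 whenever v(x) < 1, and satisfies res(α) = α for all α ∈ k. Let a ∈ K with 0 < v(a) < 1, let n ∈ ℕ, and suppose res(a^{−m}) = 0 for all m with 1 ≤ m ≤ n. Then for every β ∈ k: res( a⁻ⁿ · (1 − aβ)⁻¹ ) = βⁿ. In particular, if moreover res(a⁻ⁿ·(1 − aβ)⁻¹) = 0, then β = 0. -/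

import Mathlib

/-- for a total residue map res with res(a⁻ᵐ) = 0 for 1 ≤ m ≤ n, one has
    res(a⁻ⁿ/(1 − aβ)) = βⁿ for every β ∈ k; in particular if res(a⁻ⁿ/(1 − aβ)) = 0 then β = 0. -/
theorem stmt_13 {K : Type*} [Field K] {Γ₀ : Type*} [LinearOrderedCommGroupWithZero Γ₀]
    (v : Valuation K Γ₀) (k : Subfield K) (hkO : ∀ x ∈ k, v x ≤ 1)
    (res : K → K) (hres_mem : ∀ x : K, res x ∈ k)
    (hres_add : ∀ x y : K, res (x + y) = res x + res y)
    (hres_smul : ∀ α ∈ k, ∀ x : K, res (α * x) = α * res x)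
    (hres_m : ∀ x : K, v x < 1 → res x = 0)
    (hres_id : ∀ α ∈ k, res α = α)
    (a : K) (ha0 : 0 < v a) (ha1 : v a < 1)
    (n : ℕ) (hres_a : ∀ m : ℕ, 1 ≤ m → m ≤ n → res (a⁻¹ ^ m) = 0) :
    ∀ β ∈ k, res (a⁻¹ ^ n * (1 - a * β)⁻¹) = β ^ n ∧
      (res (a⁻¹ ^ n * (1 - a * β)⁻¹) = 0 → β = 0) := by
  intro β hβ
  have hβ1 : v β ≤ 1 := hkO β hβ
  have haβ : v (a * β) < 1 := by
    calc v (a * β) = v a * v β := v.map_mul a β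
      _ ≤ v a * 1 := mul_le_mul_right hβ1 _
      _ = v a := mul_one _
      _ < 1 := ha1
  have hone : v (1 - a * β) = 1 := v.map_one_sub_of_lt haβ
  have hne : (1 - a * β) ≠ 0 := by
    intro h; rw [h, v.map_zero] at hone; exact zero_ne_one hone
  have ha : a ≠ 0 := v.ne_zero_iff.mp (ne_of_gt ha0)
  have key : ∀ n : ℕ, (∀ m : ℕ, 1 ≤ m → m ≤ n → res (a⁻¹ ^ m) = 0) →
      res (a⁻¹ ^ n * (1 - a * β)⁻¹) = β ^ n := by
    intro n
    induction n with
    | zero =>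
      intro _
      have hsplit : (1 - a * β)⁻¹ = 1 + (a * β) * (1 - a * β)⁻¹ := by
        field_simp
        ring
      have hv : v ((a * β) * (1 - a * β)⁻¹) < 1 := by
        calc v ((a * β) * (1 - a * β)⁻¹) = v (a * β) * v (1 - a * β)⁻¹ := v.map_mul _ _
          _ = v (a * β) * 1 := by rw [v.map_inv, hone, inv_one]
          _ < 1 := by rw [mul_one]; exact haβ
      rw [pow_zero, one_mul, hsplit, hres_add, hres_id 1 (one_mem k), hres_m _ hv]
      ring
    | succ n ih =>
      intro h
      have hsplit : a⁻¹ ^ (n + 1) * (1 - a * β)⁻¹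
          = a⁻¹ ^ (n + 1) + β * (a⁻¹ ^ n * (1 - a * β)⁻¹) := by
        field_simp
        linear_combination (β * (1 / a) ^ n) * (one_div_mul_cancel ha)
      rw [hsplit, hres_add, h (n + 1) (by omega) le_rfl,
        hres_smul β hβ, ih (fun m h1 h2 => h m h1 (by omega))]
      ring
  have hk := key n hres_a
  refine ⟨hk, fun h0 => ?_⟩
  rw [hk] at h0
  exact (pow_eq_zero_iff'.mp h0).1
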